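/- Let μ and ν be Borel probability measures on ℝ supported on [0,∞), z ∈ ℂ∖ℝ, and W_μ(z) = ∫ √x/(z−x) dμ(x). Set D = z·G_μ(z)·G_ν(z) − (z·G_μ(z)−1)·(z·G_ν(z)−1). Then D ≠ 0, and for all α ∈ ℂ, ψ₁ ∈ L²(μ) with ∫ψ₁ dμ = 0, ψ₂ ∈ L²(ν) with ∫ψ₂ dν = 0, defining c₁ = [(z·G_μ(z)−1)·∫ ψ₂(y)/(z−y) dν(y) + G_ν(z)·(α·W_μ(z) + ∫ √x·ψ₁(x)/(z−x) dμ(x))]/D, c₂ = [z·G_μ(z)·∫ ψ₂(y)/(z−y) dν(y) + (z·G_ν(z)−1)·(α·W_μ(z) + ∫ √x·ψ₁(x)/(z−x) dμ(x))]/D, β = α·G_μ(z) + ∫ ψ₁(x)/(z−x) dμ(x) + W_μ(z)·(c₂−c₁), c₃ = z·β − α, φ₁(x) = (ψ₁(x) + β·x + (c₂−c₁)·√x − c₃)/(z−x), and φ₂(y) = (ψ₂(y) + c₁·y − c₂)/(z−y), the following hold: φ₁ ∈ L²(μ), φ₂ ∈ L²(ν), ∫φ₁ dμ = 0 = ∫φ₂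 dν, the function x ↦ √x·(φ₁(x)+β) is μ-integrable with ∫ √x·(φ₁(x)+β) dμ(x) = c₁, and (z·Id − R_x ∘ Q_y ∘ R_x)(β,φ₁,φ₂) = (α,ψ₁,ψ₂), where R_x(a,χ₁,χ₂) = (∫ √x·(χ₁+a) dμ, √x·(χ₁+a) − ∫ √x·(χ₁+a) dμ, χ₂) and Q_y(a,χ₁,χ₂) = (∫ y·(χ₂+a) dν, χ₁, y·(χ₂+a) − ∫ y·(χ₂+a) dν), all occurring integrals being absolutely convergent and all intermediate functions lying in the respective L² spaces (which is part of the claim). (R_x is the square root of the model operator Q_x, so this exhibits the explicit bounded inverse of z − √Q_x Q_y √Q_x in the boolean model.) -/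

import Mathlib

open MeasureTheory

/-- The Cauchy transform `G_ρ(z) = ∫ 1/(z−t) dρ(t)` of a measure on `ℝ`. -/
noncomputable def cauchyTransform (ρ : Measure ℝ) (z : ℂ) : ℂ := ∫ t, (z - (t : ℂ))⁻¹ ∂ρ

/-- The transform `W_ρ(z) = ∫ √t/(z−t) dρ(t)` of a measure on `ℝ`. -/
noncomputable def sqrtCauchyTransform (ρ : Measure ℝ) (z : ℂ) : ℂ :=
  ∫ t, (Real.sqrt t : ℂ) / (z - (t : ℂ)) ∂ρ

/-- The operator `R_x = √Q_x` of the boolean model, acting on triples `(a, χ₁, χ₂)`: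
`R_x(a,χ₁,χ₂) = (∫ √x·(χ₁+a) dμ, √x·(χ₁+a) − ∫ √x·(χ₁+a) dμ, χ₂)`. -/
noncomputable def boolRx (μ : Measure ℝ) (t : ℂ × (ℝ → ℂ) × (ℝ → ℂ)) :
    ℂ × (ℝ → ℂ) × (ℝ → ℂ) :=
  (∫ x, (Real.sqrt x : ℂ) * (t.2.1 x + t.1) ∂μ,
   fun x => (Real.sqrt x : ℂ) * (t.2.1 x + t.1)
     - ∫ x', (Real.sqrt x' : ℂ) * (t.2.1 x' + t.1) ∂μ,
   t.2.2)

/-- The operator `Q_y` of the boolean model: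
`Q_y(a,χ₁,χ₂) = (∫ y·(χ₂+a) dν, χ₁, y·(χ₂+a) − ∫ y·(χ₂+a) dν)`. -/
noncomputable def boolQy (ν : Measure ℝ) (t : ℂ × (ℝ → ℂ) × (ℝ → ℂ)) :
    ℂ × (ℝ → ℂ) × (ℝ → ℂ) :=
  (∫ y, (y : ℂ) * (t.2.2 y + t.1) ∂ν,
   t.2.1,
   fun y => (y : ℂ) * (t.2.2 y + t.1) - ∫ y', (y' : ℂ) * (t.2.2 y' + t.1) ∂ν)


lemma bm_sub_ne {z : ℂ} (hz : z.im ≠ 0) (t : ℝ) : z - (t : ℂ) ≠ 0 := by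
  intro h
  apply hz
  have := congrArg Complex.im h
  simpa using this

lemma bm_im_le_norm {z : ℂ} (t : ℝ) : |z.im| ≤ ‖z - (t : ℂ)‖ := by
  have h1 : (z - (t : ℂ)).im = z.im := by simp
  rw [← h1]
  exact Complex.abs_im_le_norm _

lemma bm_norm_inv_le {z : ℂ} (hz : z.im ≠ 0) (t : ℝ) :
    ‖(z - (t : ℂ))⁻¹‖ ≤ |z.im|⁻¹ := by
  rw [norm_inv]
  exact inv_anti₀ (abs_pos.2 hz) (bm_im_le_norm t)

lemma bm_norm_id_le {z : ℂ} (hz : z.im ≠ 0) (t : ℝ) :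
    ‖(t : ℂ) / (z - (t : ℂ))‖ ≤ 1 + ‖z‖ * |z.im|⁻¹ := by
  have h3 : (0:ℝ) < |z.im| := abs_pos.2 hz
  have h2 : |z.im| ≤ ‖z - (t:ℂ)‖ := bm_im_le_norm t
  have h4 : (0:ℝ) < ‖z - (t:ℂ)‖ := lt_of_lt_of_le h3 h2
  rw [norm_div, div_le_iff₀ h4]
  have h1 : ‖(t:ℂ)‖ ≤ ‖z - (t:ℂ)‖ + ‖z‖ := by
    have e : (t:ℂ) = -(z - t) + z := by ring
    calc ‖(t:ℂ)‖ = ‖-(z - (t:ℂ)) + z‖ := by rw [← e]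
      _ ≤ ‖-(z - (t:ℂ))‖ + ‖z‖ := norm_add_le _ _
      _ = ‖z - (t:ℂ)‖ + ‖z‖ := by rw [norm_neg]
  have h5 : (1:ℝ) ≤ |z.im|⁻¹ * ‖z - (t:ℂ)‖ := by
    rw [← div_eq_inv_mul]
    exact (one_le_div h3).2 h2
  have h6 := mul_le_mul_of_nonneg_left h5 (norm_nonneg z)
  calc ‖(t:ℂ)‖ ≤ ‖z - (t:ℂ)‖ + ‖z‖ := h1
    _ ≤ ‖z - (t:ℂ)‖ + ‖z‖ * (|z.im|⁻¹ * ‖z - (t:ℂ)‖) := by nlinarith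
    _ = (1 + ‖z‖ * |z.im|⁻¹) * ‖z - (t:ℂ)‖ := by ring

lemma bm_norm_sqrt_le {z : ℂ} (hz : z.im ≠ 0) (t : ℝ) :
    ‖((Real.sqrt t : ℝ) : ℂ) / (z - (t : ℂ))‖
      ≤ Real.sqrt ((1 + ‖z‖ * |z.im|⁻¹) * |z.im|⁻¹) := by
  have h3 : (0:ℝ) < |z.im| := abs_pos.2 hz
  have h2 : |z.im| ≤ ‖z - (t:ℂ)‖ := bm_im_le_norm t
  have h4 : (0:ℝ) < ‖z - (t:ℂ)‖ := lt_of_lt_of_le h3 h2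
  have hZ : (0:ℝ) ≤ ‖z‖ := norm_nonneg z
  have hB : (0:ℝ) ≤ (1 + ‖z‖ * |z.im|⁻¹) * |z.im|⁻¹ := by positivity
  rw [Real.le_sqrt (norm_nonneg _) hB]
  have hnorm : ‖((Real.sqrt t : ℝ) : ℂ) / (z - (t : ℂ))‖ = Real.sqrt t / ‖z - (t:ℂ)‖ := by
    rw [norm_div, Complex.norm_real, Real.norm_eq_abs, _root_.abs_of_nonneg (Real.sqrt_nonneg t)]
  rw [hnorm, div_pow]
  have h6 : (Real.sqrt t) ^ 2 ≤ ‖z - (t:ℂ)‖ + ‖z‖ := by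
    rcases le_or_gt t 0 with ht | ht
    · rw [Real.sqrt_eq_zero_of_nonpos ht]
      nlinarith
    · rw [Real.sq_sqrt ht.le]
      have h1' : ‖(t:ℂ)‖ ≤ ‖z - (t:ℂ)‖ + ‖z‖ := by
        have e : (t:ℂ) = -(z - t) + z := by ring
        calc ‖(t:ℂ)‖ = ‖-(z - (t:ℂ)) + z‖ := by rw [← e]
          _ ≤ ‖-(z - (t:ℂ))‖ + ‖z‖ := norm_add_le _ _
          _ = ‖z - (t:ℂ)‖ + ‖z‖ := by rw [norm_neg]
      calc t = ‖(t:ℂ)‖ := by rw [Complex.norm_real, Real.norm_eq_abs, abs_of_pos ht]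
        _ ≤ _ := h1'
  have key : (Real.sqrt t) ^ 2 * |z.im| ^ 2 ≤ (|z.im| + ‖z‖) * ‖z - (t:ℂ)‖ ^ 2 := by
    nlinarith [mul_le_mul_of_nonneg_right h6 (sq_nonneg |z.im|),
      mul_le_mul_of_nonneg_left h2 (mul_nonneg h4.le h3.le),
      mul_le_mul_of_nonneg_left (pow_le_pow_left₀ h3.le h2 2) hZ]
  have h7 : (Real.sqrt t) ^ 2 / ‖z - (t:ℂ)‖ ^ 2 ≤ (|z.im| + ‖z‖) / |z.im| ^ 2 :=
    (div_le_div_iff₀ (by positivity) (by positivity)).2 (by nlinarith)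
  calc (Real.sqrt t) ^ 2 / ‖z - (t:ℂ)‖ ^ 2 ≤ (|z.im| + ‖z‖) / |z.im| ^ 2 := h7
    _ = (1 + ‖z‖ * |z.im|⁻¹) * |z.im|⁻¹ := by
        rw [div_eq_iff (by positivity : |z.im| ^ 2 ≠ 0)]
        field_simp [h3.ne']

lemma bm_memL2_mul {ρ : Measure ℝ} {g m : ℝ → ℂ} (hg : MemLp g 2 ρ)
    (hm : AEStronglyMeasurable m ρ) {C : ℝ} (hC : ∀ t, ‖m t‖ ≤ C) :
    MemLp (fun t => m t * g t) 2 ρ :=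
  MemLp.of_le_mul hg (hm.mul hg.1)
    (Filter.Eventually.of_forall fun t => by
      rw [norm_mul]
      exact mul_le_mul_of_nonneg_right (hC t) (norm_nonneg _))

lemma bm_memL2_bdd {ρ : Measure ℝ} [IsFiniteMeasure ρ] {E : Type*} [NormedAddCommGroup E]
    {m : ℝ → E} (hm : AEStronglyMeasurable m ρ) {C : ℝ} (hC : ∀ t, ‖m t‖ ≤ C) :
    MemLp m 2 ρ :=
  (memLp_top_of_bound hm C (Filter.Eventually.of_forall hC)).mono_exponent le_top

lemma bm_integrable_bdd {ρ : Measure ℝ} [IsFiniteMeasure ρ] {E : Type*} [NormedAddCommGroup E]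
    {m : ℝ → E} (hm : AEStronglyMeasurable m ρ) {C : ℝ} (hC : ∀ t, ‖m t‖ ≤ C) :
    Integrable m ρ :=
  (bm_memL2_bdd hm hC).integrable one_le_two

lemma bm_sq_integral_le {ρ : Measure ℝ} [IsProbabilityMeasure ρ] {g : ℝ → ℝ}
    (hg : Integrable g ρ) (hg2 : Integrable (fun t => g t ^ 2) ρ) :
    (∫ t, g t ∂ρ) ^ 2 ≤ ∫ t, g t ^ 2 ∂ρ := by
  set c := ∫ t, g t ∂ρ with hc
  have h1 : Integrable (fun t => g t ^ 2 - 2 * c * g t) ρ := hg2.sub (hg.const_mul _)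
  have h0 : (0:ℝ) ≤ ∫ t, (g t - c) ^ 2 ∂ρ := integral_nonneg fun t => sq_nonneg _
  have he : (fun t => (g t - c) ^ 2) = fun t => (g t ^ 2 - 2 * c * g t) + c ^ 2 := by
    funext t; ring
  rw [he, integral_add h1 (integrable_const _), integral_sub hg2 (hg.const_mul _),
    MeasureTheory.integral_const_mul, integral_const] at h0
  simp only [measure_univ, probReal_univ, ENNReal.toReal_one, one_smul, smul_eq_mul] at h0
  nlinarith [h0]

lemma bm_ae_nonneg {ρ : Measure ℝ} (hρ : ρ (Set.Iio 0) = 0) : ∀ᵐ t ∂ρ, (0:ℝ) ≤ t := by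
  have h : {t : ℝ | ¬ (0:ℝ) ≤ t} = Set.Iio 0 := by
    ext t; simp [not_le]
  rw [MeasureTheory.ae_iff, h]
  exact hρ

lemma bm_facts {z : ℂ} (hz : z.im ≠ 0) (ρ : Measure ℝ) [IsProbabilityMeasure ρ]
    (hρ : ρ (Set.Iio 0) = 0) :
    cauchyTransform ρ z ≠ 0 ∧
    z.im * ((z * cauchyTransform ρ z - 1) * (starRingEnd ℂ) (cauchyTransform ρ z)).im ≤ 0 ∧
    z.im * (z * cauchyTransform ρ z - 1).im ≤ 0 := by
  have hsub := bm_sub_ne hz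
  have hcont1 : Continuous fun t : ℝ => (z - (t:ℂ))⁻¹ :=
    (continuous_const.sub Complex.continuous_ofReal).inv₀ hsub
  have hi1 : Integrable (fun t : ℝ => (z - (t:ℂ))⁻¹) ρ :=
    bm_integrable_bdd hcont1.aestronglyMeasurable (bm_norm_inv_le hz)
  set G := cauchyTransform ρ z with hG
  set J := ∫ t, (Complex.normSq (z - (t:ℂ)))⁻¹ ∂ρ with hJ
  have hnsq_pos : ∀ t : ℝ, 0 < Complex.normSq (z - (t:ℂ)) :=
    fun t => Complex.normSq_pos.2 (hsub t)
  have hJcont : Continuous fun t : ℝ => (Complex.normSq (z - (t:ℂ)))⁻¹ :=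
    ((Complex.continuous_normSq).comp
      (continuous_const.sub Complex.continuous_ofReal)).inv₀ fun t => (hnsq_pos t).ne'
  have hJbd : ∀ t : ℝ, ‖(Complex.normSq (z - (t:ℂ)))⁻¹‖ ≤ (z.im ^ 2)⁻¹ := by
    intro t
    have him2 : z.im ^ 2 ≤ Complex.normSq (z - (t:ℂ)) := by
      have h := Complex.normSq_apply (z - (t:ℂ))
      have h2 : (z - (t:ℂ)).im = z.im := by simp
      rw [h2] at h
      nlinarith [sq_nonneg (z - (t:ℂ)).re]
    rw [Real.norm_eq_abs, abs_of_pos (inv_pos.2 (hnsq_pos t))]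
    exact inv_anti₀ (by positivity) him2
  have hJint : Integrable (fun t : ℝ => (Complex.normSq (z - (t:ℂ)))⁻¹) ρ :=
    bm_integrable_bdd hJcont.aestronglyMeasurable hJbd
  have hJpos : 0 < J := by
    rw [hJ]
    refine (integral_pos_iff_support_of_nonneg (fun t => (inv_pos.2 (hnsq_pos t)).le) hJint).2 ?_
    have hs : Function.support (fun t : ℝ => (Complex.normSq (z - (t:ℂ)))⁻¹) = Set.univ :=
      Set.eq_univ_of_forall fun t => (inv_pos.2 (hnsq_pos t)).ne'
    rw [hs]
    simp
  have hImG : G.im = ∫ t, -z.im / Complex.normSq (z - (t:ℂ)) ∂ρ := by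
    have him := integral_im (𝕜 := ℂ) hi1
    simp only [RCLike.im_to_complex] at him
    rw [hG, cauchyTransform, ← him]
    refine integral_congr_ae (Filter.Eventually.of_forall fun t => ?_)
    simp [Complex.inv_im]
  have hImG' : G.im = -z.im * J := by
    rw [hImG, hJ, ← MeasureTheory.integral_const_mul]
    refine integral_congr_ae (Filter.Eventually.of_forall fun t => ?_)
    simp [div_eq_mul_inv]
  have hGne : G ≠ 0 := by
    intro h0
    have h1 : G.im = 0 := by rw [h0]; rfl
    rw [hImG'] at h1
    rcases mul_eq_zero.1 h1 with h2 | h2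
    · exact hz (by linarith [neg_eq_zero.1 h2])
    · exact hJpos.ne' h2
  have habs : Complex.normSq G ≤ J := by
    have hgnorm : Integrable (fun t : ℝ => ‖(z - (t:ℂ))⁻¹‖) ρ := hi1.norm
    have heq : (fun t : ℝ => ‖(z - (t:ℂ))⁻¹‖ ^ 2)
        = fun t : ℝ => (Complex.normSq (z - (t:ℂ)))⁻¹ := by
      funext t
      rw [norm_inv, inv_pow, Complex.sq_norm]
    have hgnorm2 : Integrable (fun t : ℝ => ‖(z - (t:ℂ))⁻¹‖ ^ 2) ρ := by
      rw [heq]; exact hJint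
    have h1 : ‖G‖ ≤ ∫ t, ‖(z - (t:ℂ))⁻¹‖ ∂ρ := by
      rw [hG, cauchyTransform]
      exact norm_integral_le_integral_norm _
    have h2 := bm_sq_integral_le hgnorm hgnorm2
    calc Complex.normSq G = ‖G‖ ^ 2 := by rw [Complex.sq_norm]
      _ ≤ (∫ t, ‖(z - (t:ℂ))⁻¹‖ ∂ρ) ^ 2 :=
          pow_le_pow_left₀ (norm_nonneg _) h1 2
      _ ≤ ∫ t, ‖(z - (t:ℂ))⁻¹‖ ^ 2 ∂ρ := h2
      _ = J := by rw [hJ, heq]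
  have hA : z.im * ((z * G - 1) * (starRingEnd ℂ) G).im ≤ 0 := by
    have hHconj : (z * G - 1) * (starRingEnd ℂ) G
        = z * (Complex.normSq G : ℂ) - (starRingEnd ℂ) G := by
      rw [sub_mul, one_mul, mul_assoc, Complex.mul_conj]
    rw [hHconj]
    have him : (z * (Complex.normSq G : ℂ) - (starRingEnd ℂ) G).im
        = z.im * Complex.normSq G + G.im := by
      simp [Complex.sub_im, Complex.mul_im, Complex.conj_im]
    rw [him, hImG']
    nlinarith [sq_nonneg z.im, mul_nonneg (sq_nonneg z.im) (sub_nonneg.2 habs)]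
  have hB : z.im * (z * G - 1).im ≤ 0 := by
    have hintz : Integrable (fun t : ℝ => z * (z - (t:ℂ))⁻¹) ρ := hi1.const_mul z
    have hzG : z * G = ∫ t, z * (z - (t:ℂ))⁻¹ ∂ρ := by
      rw [hG, cauchyTransform, MeasureTheory.integral_const_mul]
    have hImH : (z * G - 1).im = -z.im * ∫ t, (t:ℝ) / Complex.normSq (z - (t:ℂ)) ∂ρ := by
      have h3 : (z * G - 1).im = (z * G).im := by simp
      have him := integral_im (𝕜 := ℂ) hintz
      simp only [RCLike.im_to_complex] at him
      rw [h3, hzG, ← him, ← MeasureTheory.integral_const_mul]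
      refine integral_congr_ae (Filter.Eventually.of_forall fun t => ?_)
      have hzt := hsub t
      have hsplit : z * (z - (t:ℂ))⁻¹ = 1 + (t:ℂ) * (z - (t:ℂ))⁻¹ := by
        field_simp
        ring
      show (z * (z - (t:ℂ))⁻¹).im = -z.im * (t / Complex.normSq (z - (t:ℂ)))
      rw [hsplit]
      simp only [Complex.add_im, Complex.one_im, Complex.mul_im, Complex.inv_im,
        Complex.inv_re, Complex.ofReal_im, Complex.ofReal_re, zero_add]
      have h2 : (z - (t:ℂ)).im = z.im := by simp
      rw [h2]
      ring
    rw [hImH]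
    have hmom : 0 ≤ ∫ t, (t:ℝ) / Complex.normSq (z - (t:ℂ)) ∂ρ := by
      refine integral_nonneg_of_ae ?_
      filter_upwards [bm_ae_nonneg hρ] with t ht
      exact div_nonneg ht (hnsq_pos t).le
    nlinarith [sq_nonneg z.im, mul_nonneg (sq_nonneg z.im) hmom]
  exact ⟨hGne, hA, hB⟩


lemma bm_div_im (H G : ℂ) : (H / G).im = (H * (starRingEnd ℂ) G).im * (Complex.normSq G)⁻¹ := by
  rw [div_eq_mul_inv, Complex.inv_def, ← mul_assoc]
  simp [Complex.mul_im]

lemma bm_D_ne {z G₁ G₂ : ℂ} (hz : z.im ≠ 0) (h₁ : G₁ ≠ 0) (h₂ : G₂ ≠ 0)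
    (hA₁ : z.im * ((z * G₁ - 1) * (starRingEnd ℂ) G₁).im ≤ 0)
    (hB₁ : z.im * (z * G₁ - 1).im ≤ 0)
    (hA₂ : z.im * ((z * G₂ - 1) * (starRingEnd ℂ) G₂).im ≤ 0)
    (hB₂ : z.im * (z * G₂ - 1).im ≤ 0) :
    z * G₁ * G₂ - (z * G₁ - 1) * (z * G₂ - 1) ≠ 0 := by
  intro hDz
  set w₁ : ℂ := (z * G₁ - 1) / G₁ with hw₁
  set w₂ : ℂ := (z * G₂ - 1) / G₂ with hw₂
  have hzw : z = w₁ * w₂ := by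
    rw [hw₁, hw₂, div_mul_div_comm, eq_div_iff (mul_ne_zero h₁ h₂)]
    linear_combination hDz
  -- sign facts for w.im
  have hn₁ : (0:ℝ) ≤ (Complex.normSq G₁)⁻¹ := inv_nonneg.2 (Complex.normSq_nonneg G₁)
  have hn₂ : (0:ℝ) ≤ (Complex.normSq G₂)⁻¹ := inv_nonneg.2 (Complex.normSq_nonneg G₂)
  have hw₁im : z.im * w₁.im ≤ 0 := by
    rw [hw₁, bm_div_im]
    calc z.im * (((z * G₁ - 1) * (starRingEnd ℂ) G₁).im * (Complex.normSq G₁)⁻¹)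
        = (z.im * ((z * G₁ - 1) * (starRingEnd ℂ) G₁).im) * (Complex.normSq G₁)⁻¹ := by ring
      _ ≤ 0 := mul_nonpos_of_nonpos_of_nonneg hA₁ hn₁
  have hw₂im : z.im * w₂.im ≤ 0 := by
    rw [hw₂, bm_div_im]
    calc z.im * (((z * G₂ - 1) * (starRingEnd ℂ) G₂).im * (Complex.normSq G₂)⁻¹)
        = (z.im * ((z * G₂ - 1) * (starRingEnd ℂ) G₂).im) * (Complex.normSq G₂)⁻¹ := by ring
      _ ≤ 0 := mul_nonpos_of_nonpos_of_nonneg hA₂ hn₂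
  -- sign facts for (w * conj z).im
  have hkey : ∀ (G : ℂ), G ≠ 0 → ((z * G - 1) / G * (starRingEnd ℂ) z).im
      = (z * G - 1).im * (Complex.normSq G)⁻¹ := by
    intro G hG
    have e1 : (z * G - 1) / G * (starRingEnd ℂ) z
        = ((z * G - 1) * ((starRingEnd ℂ) G * (starRingEnd ℂ) z)) * (((Complex.normSq G)⁻¹ : ℝ) : ℂ) := by
      rw [div_eq_mul_inv, Complex.inv_def]
      push_cast
      ring
    have e2 : (starRingEnd ℂ) G * (starRingEnd ℂ) z = (starRingEnd ℂ) ((z * G - 1) + 1) := by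
      rw [← map_mul]
      ring_nf
    have e3 : (z * G - 1) * (starRingEnd ℂ) ((z * G - 1) + 1)
        = (Complex.normSq (z * G - 1) : ℂ) + (z * G - 1) := by
      rw [map_add, map_one, mul_add, mul_one, Complex.mul_conj]
    rw [e1, e2, e3]
    simp [Complex.mul_im, Complex.add_im]
  have hq₁ : z.im * (w₁ * (starRingEnd ℂ) z).im ≤ 0 := by
    rw [hw₁, hkey G₁ h₁]
    calc z.im * ((z * G₁ - 1).im * (Complex.normSq G₁)⁻¹)
        = (z.im * (z * G₁ - 1).im) * (Complex.normSq G₁)⁻¹ := by ring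
      _ ≤ 0 := mul_nonpos_of_nonpos_of_nonneg hB₁ hn₁
  have hq₂ : z.im * (w₂ * (starRingEnd ℂ) z).im ≤ 0 := by
    rw [hw₂, hkey G₂ h₂]
    calc z.im * ((z * G₂ - 1).im * (Complex.normSq G₂)⁻¹)
        = (z.im * (z * G₂ - 1).im) * (Complex.normSq G₂)⁻¹ := by ring
      _ ≤ 0 := mul_nonpos_of_nonpos_of_nonneg hB₂ hn₂
  have hcz : (starRingEnd ℂ) z = (starRingEnd ℂ) w₁ * (starRingEnd ℂ) w₂ := by
    rw [hzw, map_mul]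
  by_cases hw10 : w₁ = 0
  · exact hz (by rw [hzw, hw10, zero_mul]; rfl)
  by_cases hw20 : w₂ = 0
  · exact hz (by rw [hzw, hw20, mul_zero]; rfl)
  have hns₁ : 0 < Complex.normSq w₁ := Complex.normSq_pos.2 hw10
  have hns₂ : 0 < Complex.normSq w₂ := Complex.normSq_pos.2 hw20
  have h9₁ : (w₁ * (starRingEnd ℂ) z).im = Complex.normSq w₁ * (-(w₂.im)) := by
    rw [hcz, ← mul_assoc, Complex.mul_conj]
    simp [Complex.mul_im, Complex.conj_im]
  have h9₂ : (w₂ * (starRingEnd ℂ) z).im = Complex.normSq w₂ * (-(w₁.im)) := by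
    rw [hcz]
    have : w₂ * ((starRingEnd ℂ) w₁ * (starRingEnd ℂ) w₂)
        = (starRingEnd ℂ) w₁ * (w₂ * (starRingEnd ℂ) w₂) := by ring
    rw [this, Complex.mul_conj]
    simp [Complex.mul_im, Complex.conj_im, Complex.conj_re]
    ring
  have hw2im0 : w₂.im = 0 := by
    rw [h9₁] at hq₁
    have e4 : 0 ≤ z.im * w₂.im * Complex.normSq w₁ := by nlinarith
    have e5 : 0 * Complex.normSq w₁ ≤ z.im * w₂.im * Complex.normSq w₁ := by
      rw [zero_mul]; exact e4
    have e6 : 0 ≤ z.im * w₂.im := le_of_mul_le_mul_right e5 hns₁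
    have e7 : z.im * w₂.im = 0 := le_antisymm hw₂im e6
    rcases mul_eq_zero.1 e7 with h | h
    · exact absurd h hz
    · exact h
  have hw1im0 : w₁.im = 0 := by
    rw [h9₂] at hq₂
    have e4 : 0 ≤ z.im * w₁.im * Complex.normSq w₂ := by nlinarith
    have e5 : 0 * Complex.normSq w₂ ≤ z.im * w₁.im * Complex.normSq w₂ := by
      rw [zero_mul]; exact e4
    have e6 : 0 ≤ z.im * w₁.im := le_of_mul_le_mul_right e5 hns₂
    have e7 : z.im * w₁.im = 0 := le_antisymm hw₁im e6
    rcases mul_eq_zero.1 e7 with h | h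
    · exact absurd h hz
    · exact h
  apply hz
  rw [hzw, Complex.mul_im, hw1im0, hw2im0]
  ring
set_option maxHeartbeats 2000000 in
theorem boolean_model_mult_resolvent
    (μ ν : Measure ℝ) [IsProbabilityMeasure μ] [IsProbabilityMeasure ν]
    (hμ : μ (Set.Iio 0) = 0) (hν : ν (Set.Iio 0) = 0)
    (z : ℂ) (hz : z.im ≠ 0)
    (D : ℂ)
    (hD : D = z * cauchyTransform μ z * cauchyTransform ν z
      - (z * cauchyTransform μ z - 1) * (z * cauchyTransform ν z - 1))
    (α : ℂ) (ψ₁ ψ₂ : ℝ → ℂ)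
    (hψ₁ : MemLp ψ₁ 2 μ) (hψ₁0 : (∫ x, ψ₁ x ∂μ) = 0)
    (hψ₂ : MemLp ψ₂ 2 ν) (hψ₂0 : (∫ y, ψ₂ y ∂ν) = 0)
    (c₁ c₂ β c₃ : ℂ) (φ₁ φ₂ : ℝ → ℂ)
    (hc₁ : c₁ = ((z * cauchyTransform μ z - 1) * (∫ y, ψ₂ y / (z - (y : ℂ)) ∂ν)
        + cauchyTransform ν z * (α * sqrtCauchyTransform μ z
            + ∫ x, (Real.sqrt x : ℂ) * ψ₁ x / (z - (x : ℂ)) ∂μ)) / D)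
    (hc₂ : c₂ = (z * cauchyTransform μ z * (∫ y, ψ₂ y / (z - (y : ℂ)) ∂ν)
        + (z * cauchyTransform ν z - 1) * (α * sqrtCauchyTransform μ z
            + ∫ x, (Real.sqrt x : ℂ) * ψ₁ x / (z - (x : ℂ)) ∂μ)) / D)
    (hβ : β = α * cauchyTransform μ z + (∫ x, ψ₁ x / (z - (x : ℂ)) ∂μ)
        + sqrtCauchyTransform μ z * (c₂ - c₁))
    (hc₃ : c₃ = z * β - α)
    (hφ₁ : φ₁ = fun x : ℝ =>
      (ψ₁ x + β * (x : ℂ) + (c₂ - c₁) * (Real.sqrt x : ℂ) - c₃) / (z - (x : ℂ)))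
    (hφ₂ : φ₂ = fun y : ℝ => (ψ₂ y + c₁ * (y : ℂ) - c₂) / (z - (y : ℂ))) :
    D ≠ 0 ∧
    MemLp φ₁ 2 μ ∧ MemLp φ₂ 2 ν ∧
    (∫ x, φ₁ x ∂μ) = 0 ∧ (∫ y, φ₂ y ∂ν) = 0 ∧
    Integrable (fun x : ℝ => ψ₁ x / (z - (x : ℂ))) μ ∧
    Integrable (fun x : ℝ => (Real.sqrt x : ℂ) * ψ₁ x / (z - (x : ℂ))) μ ∧
    Integrable (fun y : ℝ => ψ₂ y / (z - (y : ℂ))) ν ∧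
    Integrable (fun x : ℝ => (Real.sqrt x : ℂ) * (φ₁ x + β)) μ ∧
    (∫ x, (Real.sqrt x : ℂ) * (φ₁ x + β) ∂μ) = c₁ ∧
    (let u := boolRx μ (β, φ₁, φ₂)
     let v := boolQy ν u
     let w := boolRx μ v
     MemLp u.2.1 2 μ ∧ MemLp u.2.2 2 ν ∧
     Integrable (fun y : ℝ => (y : ℂ) * (u.2.2 y + u.1)) ν ∧
     MemLp v.2.1 2 μ ∧ MemLp v.2.2 2 ν ∧
     Integrable (fun x : ℝ => (Real.sqrt x : ℂ) * (v.2.1 x + v.1)) μ ∧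
     MemLp w.2.1 2 μ ∧ MemLp w.2.2 2 ν ∧
     z * β - w.1 = α ∧
     (∀ᵐ x ∂μ, z * φ₁ x - w.2.1 x = ψ₁ x) ∧
     (∀ᵐ y ∂ν, z * φ₂ y - w.2.2 y = ψ₂ y)) := by
  have hsub : ∀ t : ℝ, z - (t : ℂ) ≠ 0 := bm_sub_ne hz
  have hposμ : ∀ᵐ x ∂μ, (0:ℝ) ≤ x := bm_ae_nonneg hμ
  obtain ⟨hGμne, hAμ, hBμ⟩ := bm_facts hz μ hμ
  obtain ⟨hGνne, hAν, hBν⟩ := bm_facts hz ν hν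
  have hD0 : D ≠ 0 := by
    rw [hD]; exact bm_D_ne hz hGμne hGνne hAμ hBμ hAν hBν
  set Gm := cauchyTransform μ z with hGm
  set Gn := cauchyTransform ν z with hGn
  set Wm := sqrtCauchyTransform μ z with hWm
  set K₁ := ∫ x, ψ₁ x / (z - (x : ℂ)) ∂μ with hK₁def
  set K₁' := ∫ x, (Real.sqrt x : ℂ) * ψ₁ x / (z - (x : ℂ)) ∂μ with hK₁'def
  set K₂ := ∫ y, ψ₂ y / (z - (y : ℂ)) ∂ν with hK₂def
  have hc₁' : c₁ * D = (z * Gm - 1) * K₂ + Gn * (α * Wm + K₁') := by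
    rw [hc₁, div_mul_cancel₀ _ hD0]
  have hc₂' : c₂ * D = z * Gm * K₂ + (z * Gn - 1) * (α * Wm + K₁') := by
    rw [hc₂, div_mul_cancel₀ _ hD0]
  -- continuity of the multipliers
  have hcont1 : Continuous fun t : ℝ => (z - (t:ℂ))⁻¹ :=
    (continuous_const.sub Complex.continuous_ofReal).inv₀ hsub
  have hcont2 : Continuous fun t : ℝ => ((Real.sqrt t : ℝ) : ℂ) / (z - (t:ℂ)) :=
    (Complex.continuous_ofReal.comp Real.continuous_sqrt).div
      (continuous_const.sub Complex.continuous_ofReal) hsub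
  have hcont3 : Continuous fun t : ℝ => (t:ℂ) / (z - (t:ℂ)) :=
    Complex.continuous_ofReal.div (continuous_const.sub Complex.continuous_ofReal) hsub
  -- MemLp of the bounded multipliers
  have hM1μ : MemLp (fun t : ℝ => (z - (t:ℂ))⁻¹) 2 μ :=
    bm_memL2_bdd hcont1.aestronglyMeasurable (bm_norm_inv_le hz)
  have hM2μ : MemLp (fun t : ℝ => ((Real.sqrt t : ℝ) : ℂ) / (z - (t:ℂ))) 2 μ :=
    bm_memL2_bdd hcont2.aestronglyMeasurable (bm_norm_sqrt_le hz)
  have hM3μ : MemLp (fun t : ℝ => (t:ℂ) / (z - (t:ℂ))) 2 μ :=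
    bm_memL2_bdd hcont3.aestronglyMeasurable (bm_norm_id_le hz)
  have hM1ν : MemLp (fun t : ℝ => (z - (t:ℂ))⁻¹) 2 ν :=
    bm_memL2_bdd hcont1.aestronglyMeasurable (bm_norm_inv_le hz)
  have hM3ν : MemLp (fun t : ℝ => (t:ℂ) / (z - (t:ℂ))) 2 ν :=
    bm_memL2_bdd hcont3.aestronglyMeasurable (bm_norm_id_le hz)
  have hi1μ : Integrable (fun t : ℝ => (z - (t:ℂ))⁻¹) μ := hM1μ.integrable one_le_two
  have hi2μ : Integrable (fun t : ℝ => ((Real.sqrt t : ℝ) : ℂ) / (z - (t:ℂ))) μ :=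
    hM2μ.integrable one_le_two
  have hi3μ : Integrable (fun t : ℝ => (t:ℂ) / (z - (t:ℂ))) μ := hM3μ.integrable one_le_two
  have hi1ν : Integrable (fun t : ℝ => (z - (t:ℂ))⁻¹) ν := hM1ν.integrable one_le_two
  have hi3ν : Integrable (fun t : ℝ => (t:ℂ) / (z - (t:ℂ))) ν := hM3ν.integrable one_le_two
  have hψ₁i : Integrable ψ₁ μ := hψ₁.integrable one_le_two
  have hψ₂i : Integrable ψ₂ ν := hψ₂.integrable one_le_two
  -- products with ψ's
  have hG1ψμ : MemLp (fun x : ℝ => ψ₁ x / (z - (x:ℂ))) 2 μ :=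
    MemLp.ae_eq (Filter.Eventually.of_forall fun x =>
      (mul_comm ((z - (x:ℂ))⁻¹) (ψ₁ x)).trans (div_eq_mul_inv (ψ₁ x) (z - (x:ℂ))).symm)
      (bm_memL2_mul hψ₁ hcont1.aestronglyMeasurable (bm_norm_inv_le hz))
  have hG2ψμ : MemLp (fun x : ℝ => (Real.sqrt x : ℂ) * ψ₁ x / (z - (x:ℂ))) 2 μ :=
    MemLp.ae_eq (Filter.Eventually.of_forall fun x => div_mul_eq_mul_div _ _ _)
      (bm_memL2_mul hψ₁ hcont2.aestronglyMeasurable (bm_norm_sqrt_le hz))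
  have hG3ψμ : MemLp (fun x : ℝ => (x:ℂ) * ψ₁ x / (z - (x:ℂ))) 2 μ :=
    MemLp.ae_eq (Filter.Eventually.of_forall fun x => div_mul_eq_mul_div _ _ _)
      (bm_memL2_mul hψ₁ hcont3.aestronglyMeasurable (bm_norm_id_le hz))
  have hG1ψν : MemLp (fun y : ℝ => ψ₂ y / (z - (y:ℂ))) 2 ν :=
    MemLp.ae_eq (Filter.Eventually.of_forall fun y =>
      (mul_comm ((z - (y:ℂ))⁻¹) (ψ₂ y)).trans (div_eq_mul_inv (ψ₂ y) (z - (y:ℂ))).symm)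
      (bm_memL2_mul hψ₂ hcont1.aestronglyMeasurable (bm_norm_inv_le hz))
  have hG3ψν : MemLp (fun y : ℝ => (y:ℂ) * ψ₂ y / (z - (y:ℂ))) 2 ν :=
    MemLp.ae_eq (Filter.Eventually.of_forall fun y => div_mul_eq_mul_div _ _ _)
      (bm_memL2_mul hψ₂ hcont3.aestronglyMeasurable (bm_norm_id_le hz))
  have hg1ψμ : Integrable (fun x : ℝ => ψ₁ x / (z - (x:ℂ))) μ := hG1ψμ.integrable one_le_two
  have hg2ψμ : Integrable (fun x : ℝ => (Real.sqrt x : ℂ) * ψ₁ x / (z - (x:ℂ))) μ :=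
    hG2ψμ.integrable one_le_two
  have hg3ψμ : Integrable (fun x : ℝ => (x:ℂ) * ψ₁ x / (z - (x:ℂ))) μ :=
    hG3ψμ.integrable one_le_two
  have hg1ψν : Integrable (fun y : ℝ => ψ₂ y / (z - (y:ℂ))) ν := hG1ψν.integrable one_le_two
  have hg3ψν : Integrable (fun y : ℝ => (y:ℂ) * ψ₂ y / (z - (y:ℂ))) ν :=
    hG3ψν.integrable one_le_two
  -- named integral identities
  have hGμeq : (∫ x, (z - (x:ℂ))⁻¹ ∂μ) = Gm := by rw [hGm]; simp only [cauchyTransform]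
  have hGνeq : (∫ y, (z - (y:ℂ))⁻¹ ∂ν) = Gn := by rw [hGn]; simp only [cauchyTransform]
  have hWμeq : (∫ x, ((Real.sqrt x : ℝ) : ℂ) / (z - (x:ℂ)) ∂μ) = Wm := by
    rw [hWm]; simp only [sqrtCauchyTransform]
  have hHμ : (∫ x, (x:ℂ) / (z - (x:ℂ)) ∂μ) = z * Gm - 1 := by
    have hpt : (fun x : ℝ => (x:ℂ) / (z - (x:ℂ)))
        = fun x : ℝ => z * (z - (x:ℂ))⁻¹ - 1 := by
      funext x; field_simp [hsub x]; ring
    rw [hpt, integral_sub (hi1μ.const_mul z) (integrable_const 1),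
      MeasureTheory.integral_const_mul, hGμeq, integral_const]
    simp
  have hHν : (∫ y, (y:ℂ) / (z - (y:ℂ)) ∂ν) = z * Gn - 1 := by
    have hpt : (fun y : ℝ => (y:ℂ) / (z - (y:ℂ)))
        = fun y : ℝ => z * (z - (y:ℂ))⁻¹ - 1 := by
      funext y; field_simp [hsub y]; ring
    rw [hpt, integral_sub (hi1ν.const_mul z) (integrable_const 1),
      MeasureTheory.integral_const_mul, hGνeq, integral_const]
    simp
  have hL₁ : (∫ x, (x:ℂ) * ψ₁ x / (z - (x:ℂ)) ∂μ) = z * K₁ := by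
    have hpt : (fun x : ℝ => (x:ℂ) * ψ₁ x / (z - (x:ℂ)))
        = fun x : ℝ => z * (ψ₁ x / (z - (x:ℂ))) - ψ₁ x := by
      funext x; field_simp [hsub x] <;> ring
    rw [hpt, integral_sub (hg1ψμ.const_mul z) hψ₁i, MeasureTheory.integral_const_mul,
      hψ₁0, sub_zero, hK₁def]
  have hL₂ : (∫ y, (y:ℂ) * ψ₂ y / (z - (y:ℂ)) ∂ν) = z * K₂ := by
    have hpt : (fun y : ℝ => (y:ℂ) * ψ₂ y / (z - (y:ℂ)))
        = fun y : ℝ => z * (ψ₂ y / (z - (y:ℂ))) - ψ₂ y := by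
      funext y; field_simp [hsub y] <;> ring
    rw [hpt, integral_sub (hg1ψν.const_mul z) hψ₂i, MeasureTheory.integral_const_mul,
      hψ₂0, sub_zero, hK₂def]
  -- MemLp of φ₁ and φ₂
  have hφ₁L2 : MemLp φ₁ 2 μ := by
    rw [hφ₁]
    have hpt : (fun x : ℝ => (ψ₁ x + β * (x:ℂ) + (c₂ - c₁) * (Real.sqrt x : ℂ) - c₃)
          / (z - (x:ℂ)))
        = fun x : ℝ => ψ₁ x / (z - (x:ℂ)) + β * ((x:ℂ) / (z - (x:ℂ)))
            + (c₂ - c₁) * (((Real.sqrt x : ℝ):ℂ) / (z - (x:ℂ))) - c₃ * (z - (x:ℂ))⁻¹ := by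
      funext x; field_simp [hsub x] <;> ring
    rw [hpt]
    exact ((hG1ψμ.add (hM3μ.const_mul β)).add (hM2μ.const_mul (c₂ - c₁))).sub
      (hM1μ.const_mul c₃)
  have hφ₂L2 : MemLp φ₂ 2 ν := by
    rw [hφ₂]
    have hpt : (fun y : ℝ => (ψ₂ y + c₁ * (y:ℂ) - c₂) / (z - (y:ℂ)))
        = fun y : ℝ => ψ₂ y / (z - (y:ℂ)) + c₁ * ((y:ℂ) / (z - (y:ℂ)))
            - c₂ * (z - (y:ℂ))⁻¹ := by
      funext y; field_simp [hsub y] <;> ring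
    rw [hpt]
    exact (hG1ψν.add (hM3ν.const_mul c₁)).sub (hM1ν.const_mul c₂)
  -- mean zero of φ₁
  have hmean1 : (∫ x, φ₁ x ∂μ) = 0 := by
    rw [show (∫ x, φ₁ x ∂μ)
        = ∫ x, (ψ₁ x / (z - (x:ℂ)) + β * ((x:ℂ) / (z - (x:ℂ)))
            + (c₂ - c₁) * (((Real.sqrt x : ℝ):ℂ) / (z - (x:ℂ))) - c₃ * (z - (x:ℂ))⁻¹) ∂μ from
      integral_congr_ae (Filter.Eventually.of_forall fun x => by
        simp only [hφ₁]; field_simp [hsub x] <;> ring)]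
    have hA1 : Integrable (fun x : ℝ => ψ₁ x / (z - (x:ℂ)) + β * ((x:ℂ) / (z - (x:ℂ)))) μ := by
      exact hg1ψμ.add (hi3μ.const_mul β)
    have hA2 : Integrable (fun x : ℝ => ψ₁ x / (z - (x:ℂ)) + β * ((x:ℂ) / (z - (x:ℂ)))
        + (c₂ - c₁) * (((Real.sqrt x : ℝ):ℂ) / (z - (x:ℂ)))) μ := by
      exact hA1.add (hi2μ.const_mul (c₂ - c₁))
    rw [integral_sub hA2 (hi1μ.const_mul c₃), integral_add hA1 (hi2μ.const_mul (c₂ - c₁)),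
      integral_add hg1ψμ (hi3μ.const_mul β),
      MeasureTheory.integral_const_mul, MeasureTheory.integral_const_mul,
      MeasureTheory.integral_const_mul, ← hK₁def, hHμ, hWμeq, hGμeq]
    rw [hc₃, hβ]; ring
  -- mean zero of φ₂ (uses the Cramer identities)
  have hmean2' : K₂ + c₁ * (z * Gn - 1) - c₂ * Gn = 0 := by
    have key : (K₂ + c₁ * (z * Gn - 1) - c₂ * Gn) * D = 0 := by
      linear_combination (z * Gn - 1) * hc₁' - Gn * hc₂' + K₂ * hD
    rcases mul_eq_zero.1 key with h | h
    · exact h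
    · exact absurd h hD0
  have hmean2 : (∫ y, φ₂ y ∂ν) = 0 := by
    rw [show (∫ y, φ₂ y ∂ν)
        = ∫ y, (ψ₂ y / (z - (y:ℂ)) + c₁ * ((y:ℂ) / (z - (y:ℂ)))
            - c₂ * (z - (y:ℂ))⁻¹) ∂ν from
      integral_congr_ae (Filter.Eventually.of_forall fun y => by
        simp only [hφ₂]; field_simp [hsub y] <;> ring)]
    have hA1 : Integrable (fun y : ℝ => ψ₂ y / (z - (y:ℂ)) + c₁ * ((y:ℂ) / (z - (y:ℂ)))) ν := by
      exact hg1ψν.add (hi3ν.const_mul c₁)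
    rw [integral_sub hA1 (hi1ν.const_mul c₂),
      integral_add hg1ψν (hi3ν.const_mul c₁), MeasureTheory.integral_const_mul,
      MeasureTheory.integral_const_mul, ← hK₂def, hHν, hGνeq]
    linear_combination hmean2'
  -- the key pointwise identity for φ₁ + β
  have hkeyφ : ∀ x : ℝ, φ₁ x + β = (ψ₁ x + (c₂ - c₁) * (Real.sqrt x : ℂ) + α) / (z - (x:ℂ)) := by
    intro x
    simp only [hφ₁]
    rw [div_add' _ _ _ (hsub x)]
    congr 1
    rw [hc₃]; ring
  have hF₁ : ∀ᵐ x ∂μ, (Real.sqrt x : ℂ) * (φ₁ x + β)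
      = (Real.sqrt x : ℂ) * ψ₁ x / (z - (x:ℂ)) + (c₂ - c₁) * ((x:ℂ) / (z - (x:ℂ)))
        + α * (((Real.sqrt x : ℝ):ℂ) / (z - (x:ℂ))) := by
    filter_upwards [hposμ] with x hx
    have hs : (Real.sqrt x : ℂ) * (Real.sqrt x : ℂ) = (x:ℂ) := by
      norm_cast; exact Real.mul_self_sqrt hx
    rw [hkeyφ x]
    field_simp [hsub x]
    linear_combination (c₂ - c₁) * hs
  have hIu_int : Integrable (fun x : ℝ => (Real.sqrt x : ℂ) * (φ₁ x + β)) μ := by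
    refine ((hg2ψμ.add (hi3μ.const_mul (c₂ - c₁))).add (hi2μ.const_mul α)).congr ?_
    filter_upwards [hF₁] with x hx
    exact hx.symm
  have hIu : (∫ x, (Real.sqrt x : ℂ) * (φ₁ x + β) ∂μ) = c₁ := by
    have hB1 : Integrable (fun x : ℝ => (Real.sqrt x : ℂ) * ψ₁ x / (z - (x:ℂ))
        + (c₂ - c₁) * ((x:ℂ) / (z - (x:ℂ)))) μ := by
      exact hg2ψμ.add (hi3μ.const_mul (c₂ - c₁))
    rw [integral_congr_ae hF₁,
      integral_add hB1 (hi2μ.const_mul α),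
      integral_add hg2ψμ (hi3μ.const_mul (c₂ - c₁)), MeasureTheory.integral_const_mul,
      MeasureTheory.integral_const_mul, ← hK₁'def, hHμ, hWμeq]
    have key : (K₁' + (c₂ - c₁) * (z * Gm - 1) + α * Wm) * D = c₁ * D := by
      linear_combination (z * Gm - 1) * hc₂' - (z * Gm) * hc₁' + (α * Wm + K₁') * hD
    exact mul_right_cancel₀ hD0 key
  -- v-level identities
  have hptv : ∀ y : ℝ, (y:ℂ) * (φ₂ y + c₁)
      = (y:ℂ) * ψ₂ y / (z - (y:ℂ)) + (c₁ * z - c₂) * ((y:ℂ) / (z - (y:ℂ))) := by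
    intro y
    simp only [hφ₂]
    field_simp [hsub y]
    ring
  have hIv_int : Integrable (fun y : ℝ => (y:ℂ) * (φ₂ y + c₁)) ν :=
    (hg3ψν.add (hi3ν.const_mul (c₁ * z - c₂))).congr
      (Filter.Eventually.of_forall fun y => (hptv y).symm)
  have hIv : (∫ y, (y:ℂ) * (φ₂ y + c₁) ∂ν) = c₂ := by
    rw [integral_congr_ae (Filter.Eventually.of_forall hptv),
      integral_add hg3ψν (hi3ν.const_mul (c₁ * z - c₂)), MeasureTheory.integral_const_mul,
      hL₂, hHν]
    linear_combination z * hmean2'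
  -- w-level identities
  have hF₂ : ∀ᵐ x ∂μ, (Real.sqrt x : ℂ) * ((Real.sqrt x : ℂ) * (φ₁ x + β) - c₁ + c₂)
      = (x:ℂ) * ψ₁ x / (z - (x:ℂ)) + α * ((x:ℂ) / (z - (x:ℂ)))
        + ((c₂ - c₁) * z) * (((Real.sqrt x : ℝ):ℂ) / (z - (x:ℂ))) := by
    filter_upwards [hposμ] with x hx
    have hs : (Real.sqrt x : ℂ) * (Real.sqrt x : ℂ) = (x:ℂ) := by
      norm_cast; exact Real.mul_self_sqrt hx
    rw [hkeyφ x]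
    field_simp [hsub x]
    linear_combination (ψ₁ x + α + (c₂ - c₁) * (Real.sqrt x : ℂ)) * hs
  have hIw_int : Integrable
      (fun x : ℝ => (Real.sqrt x : ℂ) * ((Real.sqrt x : ℂ) * (φ₁ x + β) - c₁ + c₂)) μ := by
    refine ((hg3ψμ.add (hi3μ.const_mul α)).add (hi2μ.const_mul ((c₂ - c₁) * z))).congr ?_
    filter_upwards [hF₂] with x hx
    exact hx.symm
  have hIw : (∫ x, (Real.sqrt x : ℂ) * ((Real.sqrt x : ℂ) * (φ₁ x + β) - c₁ + c₂) ∂μ)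
      = z * β - α := by
    have hB1 : Integrable (fun x : ℝ => (x:ℂ) * ψ₁ x / (z - (x:ℂ))
        + α * ((x:ℂ) / (z - (x:ℂ)))) μ := by
      exact hg3ψμ.add (hi3μ.const_mul α)
    rw [integral_congr_ae hF₂,
      integral_add hB1 (hi2μ.const_mul ((c₂ - c₁) * z)),
      integral_add hg3ψμ (hi3μ.const_mul α), MeasureTheory.integral_const_mul,
      MeasureTheory.integral_const_mul, hL₁, hHμ, hWμeq]
    rw [hβ]; ring
  -- L² memberships for the model triples
  have hu1L2 : MemLp (fun x : ℝ => (Real.sqrt x : ℂ) * (φ₁ x + β) - c₁) 2 μ := by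
    have hsum : MemLp (fun x : ℝ => (Real.sqrt x : ℂ) * ψ₁ x / (z - (x:ℂ))
        + (c₂ - c₁) * ((x:ℂ) / (z - (x:ℂ)))
        + α * (((Real.sqrt x : ℝ):ℂ) / (z - (x:ℂ)))) 2 μ :=
      (hG2ψμ.add (hM3μ.const_mul (c₂ - c₁))).add (hM2μ.const_mul α)
    have h1 : MemLp (fun x : ℝ => (Real.sqrt x : ℂ) * (φ₁ x + β)) 2 μ :=
      MemLp.ae_eq (by filter_upwards [hF₁] with x hx; exact hx.symm) hsum
    exact h1.sub (memLp_const c₁)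
  have hv2L2 : MemLp (fun y : ℝ => (y:ℂ) * (φ₂ y + c₁) - c₂) 2 ν := by
    have hsum : MemLp (fun y : ℝ => (y:ℂ) * ψ₂ y / (z - (y:ℂ))
        + (c₁ * z - c₂) * ((y:ℂ) / (z - (y:ℂ)))) 2 ν :=
      hG3ψν.add (hM3ν.const_mul (c₁ * z - c₂))
    have h1 : MemLp (fun y : ℝ => (y:ℂ) * (φ₂ y + c₁)) 2 ν :=
      MemLp.ae_eq (Filter.Eventually.of_forall fun y => (hptv y).symm) hsum
    exact h1.sub (memLp_const c₂)
  have hw1L2 : MemLp (fun x : ℝ =>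
      (Real.sqrt x : ℂ) * ((Real.sqrt x : ℂ) * (φ₁ x + β) - c₁ + c₂) - (z * β - α)) 2 μ := by
    have hsum : MemLp (fun x : ℝ => (x:ℂ) * ψ₁ x / (z - (x:ℂ))
        + α * ((x:ℂ) / (z - (x:ℂ)))
        + ((c₂ - c₁) * z) * (((Real.sqrt x : ℝ):ℂ) / (z - (x:ℂ)))) 2 μ :=
      (hG3ψμ.add (hM3μ.const_mul α)).add (hM2μ.const_mul ((c₂ - c₁) * z))
    have h1 : MemLp (fun x : ℝ =>
        (Real.sqrt x : ℂ) * ((Real.sqrt x : ℂ) * (φ₁ x + β) - c₁ + c₂)) 2 μ :=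
      MemLp.ae_eq (by filter_upwards [hF₂] with x hx; exact hx.symm) hsum
    exact h1.sub (memLp_const (z * β - α))
  -- the a.e. resolvent identities
  have hae₁ : ∀ᵐ x ∂μ, z * φ₁ x
      - ((Real.sqrt x : ℂ) * ((Real.sqrt x : ℂ) * (φ₁ x + β) - c₁ + c₂) - (z * β - α))
      = ψ₁ x := by
    filter_upwards [hposμ] with x hx
    have hs : (Real.sqrt x : ℂ) * (Real.sqrt x : ℂ) = (x:ℂ) := by
      norm_cast; exact Real.mul_self_sqrt hx
    have hq : (z - (x:ℂ)) * φ₁ x = ψ₁ x + β * (x:ℂ) + (c₂ - c₁) * (Real.sqrt x : ℂ) - c₃ := by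
      simp only [hφ₁]
      rw [mul_comm, div_mul_cancel₀ _ (hsub x)]
    linear_combination hq - (φ₁ x + β) * hs - hc₃
  have hae₂ : ∀ᵐ y ∂ν, z * φ₂ y - ((y:ℂ) * (φ₂ y + c₁) - c₂) = ψ₂ y := by
    refine Filter.Eventually.of_forall fun y => ?_
    simp only [hφ₂]
    field_simp [hsub y]
    ring
  refine ⟨hD0, hφ₁L2, hφ₂L2, hmean1, hmean2, hg1ψμ, hg2ψμ, hg1ψν, hIu_int, hIu, ?_⟩
  simp only [boolRx, boolQy]
  rw [hIu, hIv, hIw]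
  exact ⟨hu1L2, hφ₂L2, hIv_int, hu1L2, hv2L2, hIw_int, hw1L2, hv2L2, by ring, hae₁, hae₂⟩
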